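/- Let n ≥ 2 and let w = w_1⋯w_n ∈ S_n with w_n = n. Then for every x ∈ Δ_(w) and all i, j ∈ [n] with i ≠ j: cdes_L(w|_{[i,j]}) − 1 ≤ x_{[i,j]} ≤ cdes_L(w|_{[i,j]}). -/

import Mathlib

namespace PositroidPaper

variable {n : ℕ}

/-- The last element `n` of `[n] = {1,…,n}`, realized as the last element of `Fin n`. -/
def lastF (n : ℕ) [NeZero n] : Fin n :=
  ⟨n - 1, by have := Nat.pos_of_ne_zero (NeZero.ne n); omega⟩

/-- The Gale order `S ≤ᵢ T` with respect to the `i`-order on `Fin n`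
(the `i`-order is transported to the natural order on `Fin n` by `a ↦ a - i`). -/
def galeLE (i : Fin n) (S T : Finset (Fin n)) : Prop :=
  List.Forall₂ (· ≤ ·) ((S.image (fun a => a - i)).sort (· ≤ ·))
    ((T.image (fun a => a - i)).sort (· ≤ ·))

/-- A Grassmann necklace of type `(k,n)`. -/
def IsGrassmannNecklace (n k : ℕ) [NeZero n] (J : Fin n → Finset (Fin n)) : Prop :=
  (∀ i, (J i).card = k) ∧
    ∀ i : Fin n,
      (i ∈ J i → ∃ j : Fin n, J (i + 1) = insert j ((J i).erase i)) ∧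
      (i ∉ J i → J (i + 1) = J i)

/-- `B(J)`: the `k`-subsets `B` of `[n]` with `J_i ≤ᵢ B` for all `i`. -/
noncomputable def necklaceBases (n k : ℕ) (J : Fin n → Finset (Fin n)) :
    Finset (Finset (Fin n)) := by
  classical
  exact (Finset.powersetCard k (Finset.univ : Finset (Fin n))).filter
    (fun B => ∀ i, galeLE i (J i) B)

/-- The maximal minor of a `k × n` matrix on the column set `I` (taken in increasing order);
junk value `0` if `I` does not have exactly `k` elements. -/
noncomputable def colMinor {k n : ℕ} (A : Matrix (Fin k) (Fin n) ℝ) (I : Finset (Fin n)) : ℝ :=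
  if h : I.card = k then (A.submatrix id (fun j => ((I.orderIsoOfFin h) j : Fin n))).det else 0

/-- `Bs` is the set of bases of a rank-`k` positroid on `[n]`. -/
def IsPositroidBases (n k : ℕ) (Bs : Finset (Finset (Fin n))) : Prop :=
  ∃ A : Matrix (Fin k) (Fin n) ℝ, A.rank = k ∧
    (∀ I : Finset (Fin n), 0 ≤ colMinor A I) ∧
    ∀ I : Finset (Fin n), I ∈ Bs ↔ I.card = k ∧ colMinor A I ≠ 0

/-- The 0/1 indicator vector `e_B ∈ ℝ^n` of `B ⊆ [n]`. -/
def indic (B : Finset (Fin n)) : Fin n → ℝ := fun a => if a ∈ B then 1 else 0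

/-- The positroid polytope `P_J = conv{e_B : B ∈ B(J)}`. -/
def PJ (n k : ℕ) (J : Fin n → Finset (Fin n)) : Set (Fin n → ℝ) :=
  convexHull ℝ {x | ∃ B ∈ necklaceBases n k J, x = indic B}

/-- The `j`-th element (0-indexed) of `S` in the `i`-order. -/
noncomputable def nthGale [NeZero n] (i : Fin n) (S : Finset (Fin n)) (j : ℕ) : Fin n :=
  ((S.image (fun a => a - i)).sort (· ≤ ·)).getD j 0 + i

/-- The (closed) cyclic interval `[i,j] ⊆ [n]`. -/
def cycInterval (i j : Fin n) : Finset (Fin n) :=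
  Finset.univ.filter (fun a => a - i ≤ j - i)

/-- `x_{[i,j]} = x_i + x_{i+1} + ⋯ + x_{j-1}` (cyclically; the empty sum if `i = j`). -/
def cycSum (x : Fin n → ℝ) (i j : Fin n) : ℝ :=
  ∑ a ∈ Finset.univ.filter (fun a : Fin n => a - i < j - i), x a

/-- The set of cyclic left descents of the word `w|_S`, where `S ⊆ [n]` is totally ordered
by the `i`-order: an element `a ∈ S` belongs to this set iff either `a` has a successor `b`
in `S` (w.r.t. the `i`-order) occurring to its left in `w`, or `a` is the maximum of `S`,
`S` has at least two elements, and the minimum of `S` occurs to the left of `a` in `w`. -/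
noncomputable def cDesL (w : Equiv.Perm (Fin n)) (i : Fin n) (S : Finset (Fin n)) :
    Finset (Fin n) := by
  classical
  exact S.filter (fun a =>
    (∃ b ∈ S, a - i < b - i ∧ (∀ c ∈ S, a - i < c - i → b - i ≤ c - i) ∧ w⁻¹ b < w⁻¹ a) ∨
    ((∀ b ∈ S, b - i ≤ a - i) ∧ ∃ m ∈ S, m ≠ a ∧ (∀ b ∈ S, m - i ≤ b - i) ∧ w⁻¹ m < w⁻¹ a))

/-- `cdes_L(w|_S)` where `S` is ordered by the `i`-order. -/
noncomputable def cdesL (w : Equiv.Perm (Fin n)) (i : Fin n) (S : Finset (Fin n)) : ℕ :=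
  (cDesL w i S).card

/-- The cyclic rotation `w^{(r)}` of the word `w_1 ⋯ w_n` ending at the letter `r`. -/
def rotTo [NeZero n] (w : Equiv.Perm (Fin n)) (r : Fin n) : Equiv.Perm (Fin n) :=
  (Equiv.addRight (w⁻¹ r + 1)).trans w

/-- `I_r(w) = cDes_L(w^{(r)})`. -/
noncomputable def IrFinset [NeZero n] (w : Equiv.Perm (Fin n)) (r : Fin n) : Finset (Fin n) :=
  cDesL (rotTo w r) 0 Finset.univ

/-- The vertex set `{e_{I_r(w)} : r ∈ [n]}` of the `(w)`-simplex. -/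
def vertexSet [NeZero n] (w : Equiv.Perm (Fin n)) : Set (Fin n → ℝ) :=
  {x | ∃ r : Fin n, x = indic (IrFinset w r)}

/-- The `(w)`-simplex `Δ_(w) = conv{e_{I_1(w)},…,e_{I_n(w)}}`. -/
def simplexW [NeZero n] (w : Equiv.Perm (Fin n)) : Set (Fin n → ℝ) :=
  convexHull ℝ (vertexSet w)

/-- The set `D_J` of permutations labelling the circuit triangulation of `P_J`. -/
noncomputable def DJ (n k : ℕ) [NeZero n] (J : Fin n → Finset (Fin n)) :
    Finset (Equiv.Perm (Fin n)) := by
  classical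
  exact Finset.univ.filter (fun w =>
    w (lastF n) = lastF n ∧ cdesL w 0 Finset.univ = k ∧
      ∀ r j : Fin n, galeLE j (J j) (IrFinset w r))

/-- Connectedness of a matroid on `[n]` given by its set of bases: the ground set admits no
partition into nonempty `A`, `Aᶜ` such that every basis is a union of a basis of the
restriction to `A` and one of the restriction to `Aᶜ`, all such unions being bases. -/
def ConnectedBases (Bs : Finset (Finset (Fin n))) : Prop :=
  ¬ ∃ A : Finset (Fin n), A.Nonempty ∧ Aᶜ.Nonempty ∧
      ∀ B₁ ∈ Bs, ∀ B₂ ∈ Bs, (B₁ ∩ A) ∪ (B₂ \ A) ∈ Bs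

/-- `Δ_(u)` and `Δ_(w)` share a common facet. -/
def SharedFacet [NeZero n] (u w : Equiv.Perm (Fin n)) : Prop :=
  (vertexSet u ∩ vertexSet w).ncard = n - 1 ∧
    simplexW u ∩ simplexW w = convexHull ℝ (vertexSet u ∩ vertexSet w)

/-- The graph `Γ_J` of the circuit triangulation of `P_J`. -/
def gammaJ (n k : ℕ) [NeZero n] (J : Fin n → Finset (Fin n)) :
    SimpleGraph (Equiv.Perm (Fin n)) where
  Adj u w := u ≠ w ∧ u ∈ DJ n k J ∧ w ∈ DJ n k J ∧ SharedFacet u w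
  symm := by
    constructor
    rintro u w ⟨hne, hu, hw, hc, hi⟩
    refine ⟨hne.symm, hw, hu, ?_, ?_⟩
    · rwa [Set.inter_comm]
    · rw [Set.inter_comm (simplexW w) (simplexW u), Set.inter_comm (vertexSet w) (vertexSet u)]
      exact hi
  loopless := ⟨fun u h => h.1 rfl⟩

/-- Graph distance in `Γ_J`. -/
noncomputable def distJ (n k : ℕ) [NeZero n] (J : Fin n → Finset (Fin n))
    (u w : Equiv.Perm (Fin n)) : ℕ :=
  (gammaJ n k J).dist u w

/-- The partial order `≺` on `D_J` determined by `w₀`. -/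
def precJ (n k : ℕ) [NeZero n] (J : Fin n → Finset (Fin n))
    (w0 u v : Equiv.Perm (Fin n)) : Prop :=
  u ≠ v ∧ distJ n k J w0 u + distJ n k J u v = distJ n k J w0 v

/-- `cover(w)`: the number of elements of `D_J` covered by `w` in `(D_J, ≺)`. -/
noncomputable def coverNum (n k : ℕ) [NeZero n] (J : Fin n → Finset (Fin n))
    (w0 w : Equiv.Perm (Fin n)) : ℕ :=
  {u : Equiv.Perm (Fin n) | u ∈ DJ n k J ∧ precJ n k J w0 u w ∧
    ¬ ∃ v ∈ DJ n k J, precJ n k J w0 u v ∧ precJ n k J w0 v w}.ncard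

/-- The facet of `Δ_(w)` obtained by deleting the vertex `e_{I_r(w)}`. -/
def facetW [NeZero n] (w : Equiv.Perm (Fin n)) (r : Fin n) : Set (Fin n → ℝ) :=
  convexHull ℝ {x | ∃ r' : Fin n, r' ≠ r ∧ x = indic (IrFinset w r')}

/-- The Ehrhart counting function `L(X,t) = #(t·X ∩ ℤ^m)`. -/
noncomputable def Lcount {m : ℕ} (X : Set (Fin m → ℝ)) (t : ℕ) : ℕ :=
  ((fun x : Fin m → ℝ => (t : ℝ) • x) '' X ∩ {x | ∀ a, ∃ z : ℤ, x a = (z : ℝ)}).ncard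

/-- Projection `ℝ^n → ℝ^{n-1}` onto the first `n-1` coordinates. -/
def proj (n : ℕ) (x : Fin n → ℝ) : Fin (n - 1) → ℝ :=
  fun a => x (Fin.castLE (Nat.sub_le n 1) a)

/-- `F` is an upper facet of `Q ⊆ ℝ^m`. -/
def IsUpperFacet {m : ℕ} (Q F : Set (Fin m → ℝ)) : Prop :=
  ∃ a b : Fin m, a ≤ b ∧ ∃ c : ℤ,
    F = Q ∩ {x | ∑ t ∈ Finset.Icc a b, x t = (c : ℝ)} ∧
    Q ⊆ {x | ∑ t ∈ Finset.Icc a b, x t ≤ (c : ℝ)} ∧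
    Module.finrank ℝ (affineSpan ℝ F).direction = m - 1

/-- The half-open polytope: `Q` with all its upper facets removed. -/
def halfOpen {m : ℕ} (Q : Set (Fin m → ℝ)) : Set (Fin m → ℝ) :=
  Q \ ⋃₀ {F | IsUpperFacet Q F}

/-- The half-open simplex `∇°_w`. -/
def nablaO [NeZero n] (w : Equiv.Perm (Fin n)) : Set (Fin n → ℝ) :=
  {y | 0 < y (w 0) ∧ y (w (lastF n)) ≤ 1 ∧
    ∀ p : Fin n, p ≠ lastF n →
      (w p < w (p + 1) → y (w p) ≤ y (w (p + 1))) ∧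
      (w (p + 1) < w p → y (w p) < y (w (p + 1)))}

/-- `des(w) = #{i ∈ [n-1] : w_i > w_{i+1}}`. -/
noncomputable def desNum [NeZero n] (w : Equiv.Perm (Fin n)) : ℕ := by
  classical
  exact (Finset.univ.filter (fun p : Fin n => p ≠ lastF n ∧ w (p + 1) < w p)).card

/-- `F` is a facet of the polytope `P ⊆ ℝ^n`. -/
def IsFacetOf {n : ℕ} (P F : Set (Fin n → ℝ)) : Prop :=
  ∃ (u : Fin n → ℝ) (c : ℝ),
    F = P ∩ {x | ∑ a, u a * x a = c} ∧ P ⊆ {x | ∑ a, u a * x a ≤ c} ∧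
    Module.finrank ℝ (affineSpan ℝ F).direction + 1 =
      Module.finrank ℝ (affineSpan ℝ P).direction



section Aux
variable {n : ℕ} [NeZero n]
set_option linter.unusedSectionVars false
set_option linter.unusedVariables false

private lemma fin_sub_val (a b : Fin n) :
    (a - b).val = if b.val ≤ a.val then a.val - b.val else n + a.val - b.val := by
  have ha := a.isLt
  have hb := b.isLt
  have h : (a - b).val = (n - b.val + a.val) % n := by rw [Fin.sub_def]
  rcases Nat.lt_or_ge (n - b.val + a.val) n with h2 | h2
  · rw [h, Nat.mod_eq_of_lt h2]; split <;> omega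
  · rw [h, Nat.mod_eq_sub_mod h2, Nat.mod_eq_of_lt (by omega)]; split <;> omega

private lemma fin_add_val (a b : Fin n) :
    (a + b).val = if a.val + b.val < n then a.val + b.val else a.val + b.val - n := by
  have ha := a.isLt
  have hb := b.isLt
  have h : (a + b).val = (a.val + b.val) % n := by rw [Fin.add_def]
  rcases Nat.lt_or_ge (a.val + b.val) n with h2 | h2
  · rw [h, Nat.mod_eq_of_lt h2]; split <;> omega
  · rw [h, Nat.mod_eq_sub_mod h2, Nat.mod_eq_of_lt (by omega)]; split <;> omega

private lemma fin_one_val (hn : 2 ≤ n) : (1 : Fin n).val = 1 := by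
  rw [Fin.val_one', Nat.mod_eq_of_lt (by omega)]

private lemma fin_sub_ne_zero {a b : Fin n} (h : a ≠ b) : (a - b).val ≠ 0 := by
  have ha := a.isLt
  have hb := b.isLt
  have hv : a.val ≠ b.val := fun hv => h (Fin.ext hv)
  rw [fin_sub_val]; split <;> omega

private lemma fin_sub_tri (a b c : Fin n) :
    (a - c).val = (a - b).val + (b - c).val ∨
    (a - c).val + n = (a - b).val + (b - c).val := by
  have h : (a - b) + (b - c) = a - c := sub_add_sub_cancel a b c
  have h2 := congrArg Fin.val h
  rw [fin_add_val] at h2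
  have h3 := (a - c).isLt
  have h4 := (a - b).isLt
  have h5 := (b - c).isLt
  split at h2 <;> omega

/-- Indicator (as an integer) of `t ∈ (a,b]` (the cyclic half-open arc). -/
private def arcInd (t a b : Fin n) : ℤ :=
  if 1 ≤ (t - a).val ∧ (t - a).val ≤ (b - a).val then 1 else 0

private lemma arcInd_def (t a b : Fin n) :
    arcInd t a b = if 1 ≤ (t - a).val ∧ (t - a).val ≤ (b - a).val then 1 else 0 := rfl

private lemma arcInd_nonneg (t a b : Fin n) : 0 ≤ arcInd t a b := by
  rw [arcInd_def]; split <;> omega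

private lemma arcInd_le_one (t a b : Fin n) : arcInd t a b ≤ 1 := by
  rw [arcInd_def]; split <;> omega

private lemma lt_iff_arc (s x y : Fin n) (hxy : x ≠ y) :
    y - s < x - s ↔ arcInd s x y = 1 := by
  have hx := x.isLt
  have hy := y.isLt
  have hs := s.isLt
  have hv : x.val ≠ y.val := fun hv => hxy (Fin.ext hv)
  rw [Fin.lt_def, arcInd_def]
  rw [fin_sub_val y s, fin_sub_val x s, fin_sub_val s x, fin_sub_val y x]
  split_ifs <;> omega

private lemma arc_compl (t x y : Fin n) (hxy : x ≠ y) :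
    arcInd t x y + arcInd t y x = 1 := by
  have hx := x.isLt
  have hy := y.isLt
  have ht := t.isLt
  have hv : x.val ≠ y.val := fun hv => hxy (Fin.ext hv)
  rw [arcInd_def, arcInd_def]
  rw [fin_sub_val t x, fin_sub_val t y, fin_sub_val y x, fin_sub_val x y]
  split_ifs <;> omega

private lemma arc_comp_nat (N T1 T2 Z1 Z2 A1 A2 A3 : ℕ)
    (hT1 : T1 < N) (hT2 : T2 < N) (hZ1 : Z1 < N) (hZ2 : Z2 < N)
    (hA1 : A1 < N) (hA2 : A2 < N) (hA3 : A3 < N)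
    (hA1p : A1 ≠ 0) (hA2p : A2 ≠ 0) (hA3p : A3 ≠ 0)
    (h1 : T1 = T2 + A1 ∨ T1 + N = T2 + A1)
    (h2 : Z1 = Z2 + A1 ∨ Z1 + N = Z2 + A1)
    (h3 : A3 = A2 + A1 ∨ A3 + N = A2 + A1) :
    (if 1 ≤ T1 ∧ T1 ≤ A1 then (1 : ℤ) else 0)
      + (if 1 ≤ T2 ∧ T2 ≤ A2 then 1 else 0)
      - (if 1 ≤ T1 ∧ T1 ≤ A3 then 1 else 0)
    = (if 1 ≤ Z1 ∧ Z1 ≤ A1 then 1 else 0)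
      + (if 1 ≤ Z2 ∧ Z2 ≤ A2 then 1 else 0)
      - (if 1 ≤ Z1 ∧ Z1 ≤ A3 then 1 else 0) := by
  split_ifs <;> omega

private lemma arc_comp (a b c s : Fin n) (hab : a ≠ b) (hbc : b ≠ c) (hac : a ≠ c) :
    arcInd s a b + arcInd s b c - arcInd s a c
      = arcInd 0 a b + arcInd 0 b c - arcInd 0 a c := by
  rw [arcInd_def, arcInd_def, arcInd_def, arcInd_def, arcInd_def, arcInd_def]
  exact arc_comp_nat n (s - a).val (s - b).val ((0 : Fin n) - a).val ((0 : Fin n) - b).val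
    (b - a).val (c - b).val (c - a).val
    (s - a).isLt (s - b).isLt ((0 : Fin n) - a).isLt ((0 : Fin n) - b).isLt
    (b - a).isLt (c - b).isLt (c - a).isLt
    (fin_sub_ne_zero (Ne.symm hab)) (fin_sub_ne_zero (Ne.symm hbc))
    (fin_sub_ne_zero (Ne.symm hac))
    (fin_sub_tri s b a) (fin_sub_tri (0 : Fin n) b a) (fin_sub_tri c b a)

end Aux


section Main
variable {n : ℕ} [NeZero n]

private lemma fin_succ_val (hn : 2 ≤ n) {y : Fin n} (h : y.val + 1 < n) :
    (y + 1).val = y.val + 1 := by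
  rw [fin_add_val, fin_one_val hn]; split <;> omega

private lemma fin_succ_ne (hn : 2 ≤ n) (a : Fin n) : a + 1 ≠ a := by
  intro h
  have h2 := congrArg Fin.val h
  rw [fin_add_val, fin_one_val hn] at h2
  have := a.isLt
  split at h2 <;> omega

private lemma fin_val_zero' : ((0 : Fin n)).val = 0 := by
  simp

private lemma fin_zero_le' (x : Fin n) : (0 : Fin n) ≤ x := by
  rw [Fin.le_def, fin_val_zero']; omega

private lemma mem_cDesL_iff (w : Equiv.Perm (Fin n)) (i : Fin n) (S : Finset (Fin n))
    (a : Fin n) :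
    a ∈ cDesL w i S ↔ a ∈ S ∧
      ((∃ b ∈ S, a - i < b - i ∧ (∀ c ∈ S, a - i < c - i → b - i ≤ c - i) ∧ w⁻¹ b < w⁻¹ a) ∨
       ((∀ b ∈ S, b - i ≤ a - i) ∧
         ∃ m ∈ S, m ≠ a ∧ (∀ b ∈ S, m - i ≤ b - i) ∧ w⁻¹ m < w⁻¹ a)) := by
  simp only [cDesL, Finset.mem_filter]

private lemma mem_cycInterval (i j a : Fin n) :
    a ∈ cycInterval i j ↔ a - i ≤ j - i := by
  simp [cycInterval]

private lemma mem_cdes_lt (hn : 2 ≤ n) (w : Equiv.Perm (Fin n)) (i j a : Fin n)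
    (ha : a - i < j - i) :
    a ∈ cDesL w i (cycInterval i j) ↔ w⁻¹ (a + 1) < w⁻¹ a := by
  have hmemS : a ∈ cycInterval i j := (mem_cycInterval i j a).mpr (le_of_lt ha)
  have hsucc_sub : (a + 1) - i = (a - i) + 1 := by
    rw [add_sub_right_comm]
  have hyv : (a - i).val + 1 < n := by
    have h1 := (j - i).isLt
    have h2 := Fin.lt_def.mp ha
    omega
  have hsv : ((a - i) + 1).val = (a - i).val + 1 := fin_succ_val hn hyv
  have hle : (a - i) + 1 ≤ j - i := by
    rw [Fin.le_def, hsv]; have := Fin.lt_def.mp ha; omega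
  have hsuccmem : a + 1 ∈ cycInterval i j := by
    rw [mem_cycInterval, hsucc_sub]; exact hle
  constructor
  · intro h
    rcases ((mem_cDesL_iff w i _ a).mp h).2 with ⟨b, hbS, hab, hbmin, hblt⟩ | ⟨hmax, -⟩
    · have h1 : b - i ≤ (a + 1) - i := by
        refine hbmin (a + 1) hsuccmem ?_
        rw [hsucc_sub, Fin.lt_def, hsv]; omega
      have h2 : (a + 1) - i ≤ b - i := by
        rw [hsucc_sub, Fin.le_def, hsv]
        have := Fin.lt_def.mp hab; omega
      have hb : b = a + 1 := sub_left_inj.mp (le_antisymm h1 h2)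
      rwa [hb] at hblt
    · exfalso
      have hj : j ∈ cycInterval i j := (mem_cycInterval i j j).mpr le_rfl
      exact absurd (hmax j hj) (not_le.mpr ha)
  · intro h
    refine (mem_cDesL_iff w i _ a).mpr ⟨hmemS, Or.inl ⟨a + 1, hsuccmem, ?_, ?_, h⟩⟩
    · rw [hsucc_sub, Fin.lt_def, hsv]; omega
    · intro c hc hlt
      rw [hsucc_sub, Fin.le_def, hsv]
      have := Fin.lt_def.mp hlt; omega

private lemma mem_cdes_top (w : Equiv.Perm (Fin n)) (i j : Fin n) (hij : i ≠ j) :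
    j ∈ cDesL w i (cycInterval i j) ↔ w⁻¹ i < w⁻¹ j := by
  have hiS : i ∈ cycInterval i j := by
    rw [mem_cycInterval, sub_self]; exact fin_zero_le' _
  have hjS : j ∈ cycInterval i j := (mem_cycInterval i j j).mpr le_rfl
  constructor
  · intro h
    rcases ((mem_cDesL_iff w i _ j).mp h).2 with ⟨b, hbS, hjb, -, -⟩ |
      ⟨-, m, hmS, hmne, hmmin, hmlt⟩
    · exfalso
      exact absurd ((mem_cycInterval i j b).mp hbS) (not_le.mpr hjb)
    · have h0 : m - i ≤ i - i := hmmin i hiS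
      rw [sub_self] at h0
      have hm0 : m - i = 0 := le_antisymm h0 (fin_zero_le' _)
      have hm : m = i := sub_eq_zero.mp hm0
      rwa [hm] at hmlt
  · intro h
    refine (mem_cDesL_iff w i _ j).mpr ⟨hjS, Or.inr ⟨?_, i, hiS, hij, ?_, h⟩⟩
    · exact fun b hb => (mem_cycInterval i j b).mp hb
    · intro b hb
      rw [sub_self]; exact fin_zero_le' _

private lemma lastF_val' : (lastF n).val = n - 1 := rfl

private lemma mem_Ir_iff (hn : 2 ≤ n) (w : Equiv.Perm (Fin n)) (r a : Fin n) :
    a ∈ IrFinset w r ↔ (rotTo w r)⁻¹ (a + 1) < (rotTo w r)⁻¹ a := by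
  set u := rotTo w r with hu
  have hmem := mem_cDesL_iff u 0 (Finset.univ : Finset (Fin n)) a
  simp only [Finset.mem_univ, true_and, true_implies, sub_zero] at hmem
  rw [show IrFinset w r = cDesL u 0 Finset.univ from rfl, hmem]
  by_cases hlast : a = lastF n
  · subst hlast
    have hsucc : lastF n + 1 = (0 : Fin n) := by
      apply Fin.ext
      rw [fin_add_val, fin_one_val hn, lastF_val', fin_val_zero']
      split <;> omega
    constructor
    · rintro (⟨b, hb, -, -⟩ | ⟨-, m, hmne, hmmin, hmlt⟩)
      · exfalso
        have h1 := Fin.lt_def.mp hb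
        have h2 := b.isLt
        rw [lastF_val'] at h1
        omega
      · have hm : m = 0 := le_antisymm (hmmin 0) (fin_zero_le' _)
        rw [hsucc]
        rwa [hm] at hmlt
    · intro h
      rw [hsucc] at h
      refine Or.inr ⟨?_, 0, ?_, fun b => fin_zero_le' b, h⟩
      · intro b
        rw [Fin.le_def, lastF_val']
        have := b.isLt; omega
      · intro h0
        have := congrArg Fin.val h0
        rw [fin_val_zero', lastF_val'] at this
        omega
  · have hav : a.val < n - 1 := by
      have h1 := a.isLt
      have h2 : a.val ≠ n - 1 := fun h => hlast (Fin.ext (h.trans lastF_val'.symm))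
      omega
    have hs : (a + 1).val = a.val + 1 := fin_succ_val hn (by omega)
    constructor
    · rintro (⟨b, hab, hbmin, hblt⟩ | ⟨hmax, -⟩)
      · have h1 : b ≤ a + 1 := hbmin (a + 1) (by rw [Fin.lt_def, hs]; omega)
        have h2 : a + 1 ≤ b := by
          rw [Fin.le_def, hs]
          have := Fin.lt_def.mp hab; omega
        have hb : b = a + 1 := le_antisymm h1 h2
        rwa [hb] at hblt
      · exfalso
        have := Fin.le_def.mp (hmax (lastF n))
        rw [lastF_val'] at this
        omega
    · intro h
      refine Or.inl ⟨a + 1, by rw [Fin.lt_def, hs]; omega, ?_, h⟩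
      intro c hc
      rw [Fin.le_def, hs]
      have := Fin.lt_def.mp hc; omega

private lemma rot_inv (w : Equiv.Perm (Fin n)) (r x : Fin n) :
    (rotTo w r)⁻¹ x = w⁻¹ x - (w⁻¹ r + 1) := by
  simp [rotTo, Equiv.Perm.inv_def, Equiv.symm_trans_apply, Equiv.addRight,
    Equiv.Perm.inv_def, sub_eq_add_neg]

private lemma indic_Ir (hn : 2 ≤ n) (w : Equiv.Perm (Fin n)) (r a : Fin n) :
    (if a ∈ IrFinset w r then (1 : ℤ) else 0)
      = arcInd (w⁻¹ r + 1) (w⁻¹ a) (w⁻¹ (a + 1)) := by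
  have hne : w⁻¹ a ≠ w⁻¹ (a + 1) := by
    intro h
    exact fin_succ_ne hn a ((Equiv.injective _ h).symm)
  have harc := lt_iff_arc (w⁻¹ r + 1) (w⁻¹ a) (w⁻¹ (a + 1)) hne
  have hmem := mem_Ir_iff hn w r a
  rw [rot_inv, rot_inv] at hmem
  by_cases h : a ∈ IrFinset w r
  · rw [if_pos h]; exact (harc.mp (hmem.mp h)).symm
  · rw [if_neg h]
    have h2 : arcInd (w⁻¹ r + 1) (w⁻¹ a) (w⁻¹ (a + 1)) ≠ 1 :=
      fun he => h (hmem.mpr (harc.mpr he))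
    have h3 := arcInd_nonneg (w⁻¹ r + 1) (w⁻¹ a) (w⁻¹ (a + 1))
    have h4 := arcInd_le_one (w⁻¹ r + 1) (w⁻¹ a) (w⁻¹ (a + 1))
    omega

private lemma indic_D (hn : 2 ≤ n) (w : Equiv.Perm (Fin n)) (i j a : Fin n)
    (ha : a - i < j - i) :
    (if a ∈ cDesL w i (cycInterval i j) then (1 : ℤ) else 0)
      = arcInd 0 (w⁻¹ a) (w⁻¹ (a + 1)) := by
  have hne : w⁻¹ a ≠ w⁻¹ (a + 1) := by
    intro h
    exact fin_succ_ne hn a ((Equiv.injective _ h).symm)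
  have harc := lt_iff_arc 0 (w⁻¹ a) (w⁻¹ (a + 1)) hne
  rw [sub_zero, sub_zero] at harc
  have hmem := mem_cdes_lt hn w i j a ha
  by_cases h : a ∈ cDesL w i (cycInterval i j)
  · rw [if_pos h]; exact (harc.mp (hmem.mp h)).symm
  · rw [if_neg h]
    have h2 : arcInd 0 (w⁻¹ a) (w⁻¹ (a + 1)) ≠ 1 :=
      fun he => h (hmem.mpr (harc.mpr he))
    have h3 := arcInd_nonneg 0 (w⁻¹ a) (w⁻¹ (a + 1))
    have h4 := arcInd_le_one 0 (w⁻¹ a) (w⁻¹ (a + 1))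
    omega

private lemma indic_top (w : Equiv.Perm (Fin n)) (i j : Fin n) (hij : i ≠ j) :
    (if j ∈ cDesL w i (cycInterval i j) then (1 : ℤ) else 0)
      = 1 - arcInd 0 (w⁻¹ i) (w⁻¹ j) := by
  have hne : w⁻¹ j ≠ w⁻¹ i := fun h => hij (Equiv.injective _ h).symm
  have harc := lt_iff_arc 0 (w⁻¹ j) (w⁻¹ i) hne
  rw [sub_zero, sub_zero] at harc
  have hcompl := arc_compl 0 (w⁻¹ j) (w⁻¹ i) hne
  have hmem := mem_cdes_top w i j hij
  by_cases h : j ∈ cDesL w i (cycInterval i j)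
  · rw [if_pos h]
    have := harc.mp (hmem.mp h)
    omega
  · rw [if_neg h]
    have h2 : arcInd 0 (w⁻¹ j) (w⁻¹ i) ≠ 1 :=
      fun he => h (hmem.mpr (harc.mpr he))
    have h3 := arcInd_nonneg 0 (w⁻¹ j) (w⁻¹ i)
    have h4 := arcInd_le_one 0 (w⁻¹ j) (w⁻¹ i)
    omega

private lemma interval_insert (i j : Fin n) :
    cycInterval i j = insert j (Finset.univ.filter (fun a : Fin n => a - i < j - i)) := by
  ext a
  simp only [cycInterval, Finset.mem_filter, Finset.mem_univ, true_and, Finset.mem_insert]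
  rw [le_iff_lt_or_eq]
  constructor
  · rintro (h | h)
    · exact Or.inr h
    · exact Or.inl (sub_left_inj.mp h)
  · rintro (rfl | h)
    · exact Or.inr rfl
    · exact Or.inl h

private lemma j_notmem_afin (i j : Fin n) :
    j ∉ Finset.univ.filter (fun a : Fin n => a - i < j - i) := by
  simp

private lemma cdes_eval (hn : 2 ≤ n) (w : Equiv.Perm (Fin n)) (i j : Fin n) (hij : i ≠ j) :
    (cdesL w i (cycInterval i j) : ℤ)
      = (∑ a ∈ Finset.univ.filter (fun a : Fin n => a - i < j - i),
          arcInd 0 (w⁻¹ a) (w⁻¹ (a + 1)))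
        + 1 - arcInd 0 (w⁻¹ i) (w⁻¹ j) := by
  classical
  have hTS : cDesL w i (cycInterval i j) ⊆ cycInterval i j :=
    fun a ha => ((mem_cDesL_iff w i _ a).mp ha).1
  have hcard : (cdesL w i (cycInterval i j) : ℤ)
      = ∑ a ∈ cycInterval i j,
          (if a ∈ cDesL w i (cycInterval i j) then (1 : ℤ) else 0) := by
    rw [Finset.sum_ite_mem, Finset.inter_eq_right.mpr hTS, Finset.sum_const, nsmul_eq_mul,
      mul_one, cdesL]
  calc (cdesL w i (cycInterval i j) : ℤ)
      = ∑ a ∈ cycInterval i j,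
          (if a ∈ cDesL w i (cycInterval i j) then (1 : ℤ) else 0) := hcard
    _ = ∑ a ∈ insert j (Finset.univ.filter (fun a : Fin n => a - i < j - i)),
          (if a ∈ cDesL w i (cycInterval i j) then (1 : ℤ) else 0) := by
        rw [Finset.sum_congr (interval_insert i j) (fun _ _ => rfl)]
    _ = (if j ∈ cDesL w i (cycInterval i j) then (1 : ℤ) else 0)
        + ∑ a ∈ Finset.univ.filter (fun a : Fin n => a - i < j - i),
          (if a ∈ cDesL w i (cycInterval i j) then (1 : ℤ) else 0) :=
        Finset.sum_insert (j_notmem_afin i j)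
    _ = (1 - arcInd 0 (w⁻¹ i) (w⁻¹ j))
        + ∑ a ∈ Finset.univ.filter (fun a : Fin n => a - i < j - i),
          arcInd 0 (w⁻¹ a) (w⁻¹ (a + 1)) := by
        rw [indic_top w i j hij]
        congr 1
        refine Finset.sum_congr rfl fun a ha => ?_
        exact indic_D hn w i j a (by simpa using (Finset.mem_filter.mp ha).2)
    _ = _ := by ring

private lemma sum_arc (hn : 2 ≤ n) (v : Equiv.Perm (Fin n)) (s : Fin n) :
    ∀ m : ℕ, ∀ i j : Fin n, (j - i).val = m + 1 →
      (∑ a ∈ Finset.univ.filter (fun a : Fin n => a - i < j - i),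
          arcInd s (v a) (v (a + 1)))
        = (∑ a ∈ Finset.univ.filter (fun a : Fin n => a - i < j - i),
            arcInd 0 (v a) (v (a + 1)))
          + arcInd s (v i) (v j) - arcInd 0 (v i) (v j) := by
  intro m
  induction m with
  | zero =>
    intro i j h
    have hset : Finset.univ.filter (fun a : Fin n => a - i < j - i) = {i} := by
      ext a
      simp only [Finset.mem_filter, Finset.mem_univ, true_and, Finset.mem_singleton,
        Fin.lt_def, h]
      constructor
      · intro hlt
        have h0 : (a - i).val = 0 := by omega
        have : a - i = 0 := Fin.ext (by rw [h0, fin_val_zero'])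
        exact sub_eq_zero.mp this
      · rintro rfl
        rw [sub_self, fin_val_zero']; omega
    have hj : j = i + 1 := by
      have h1 : (j - i) = 1 := Fin.ext (by rw [h, fin_one_val hn])
      have := sub_add_cancel j i
      rw [h1] at this
      rw [← this, add_comm]
    rw [hset, Finset.sum_singleton, Finset.sum_singleton, hj]
    ring
  | succ m ih =>
    intro i j h
    set j' := j - 1 with hj'
    have hone : (1 : Fin n).val = 1 := fin_one_val hn
    have hj'i : j' - i = (j - i) - 1 := by
      rw [hj', sub_right_comm]
    have h1 : (j' - i).val = m + 1 := by
      rw [hj'i, fin_sub_val, hone, h]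
      have := (j - i).isLt
      split <;> omega
    have hij' : i ≠ j' := by
      intro hh
      have : (j' - i).val = 0 := by rw [← hh, sub_self, fin_val_zero']
      omega
    have hj'j : j' ≠ j := by
      intro hh
      rw [hh] at h1
      omega
    have hij : i ≠ j := by
      intro hh
      have : (j - i).val = 0 := by rw [← hh, sub_self, fin_val_zero']
      omega
    have hsplit : Finset.univ.filter (fun a : Fin n => a - i < j - i)
        = insert j' (Finset.univ.filter (fun a : Fin n => a - i < j' - i)) := by
      ext a
      simp only [Finset.mem_filter, Finset.mem_univ, true_and, Finset.mem_insert, Fin.lt_def,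
        h, h1]
      constructor
      · intro hlt
        rcases Nat.lt_or_ge (a - i).val (m + 1) with h' | h'
        · exact Or.inr h'
        · left
          have he : (a - i).val = (j' - i).val := by omega
          exact sub_left_inj.mp (Fin.ext he)
      · rintro (rfl | h')
        · omega
        · omega
    have hnotmem : j' ∉ Finset.univ.filter (fun a : Fin n => a - i < j' - i) := by
      simp
    have hj'succ : j' + 1 = j := sub_add_cancel j 1
    rw [hsplit, Finset.sum_insert hnotmem, Finset.sum_insert hnotmem, ih i j' h1, hj'succ]
    have hcomp := arc_comp (v i) (v j') (v j) s
      (fun hh => hij' (Equiv.injective _ hh))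
      (fun hh => hj'j (Equiv.injective _ hh))
      (fun hh => hij (Equiv.injective _ hh))
    linarith [hcomp]

private lemma cycSum_indic (B : Finset (Fin n)) (i j : Fin n) :
    cycSum (indic B) i j
      = ((∑ a ∈ Finset.univ.filter (fun a : Fin n => a - i < j - i),
          (if a ∈ B then (1 : ℤ) else 0) : ℤ) : ℝ) := by
  classical
  rw [cycSum]
  push_cast
  refine Finset.sum_congr rfl fun a _ => ?_
  rw [indic]

private lemma vertex_val (hn : 2 ≤ n) (w : Equiv.Perm (Fin n)) (i j : Fin n)
    (hij : i ≠ j) (r : Fin n) :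
    ∃ k : ℤ, (k = 0 ∨ k = 1) ∧
      cycSum (indic (IrFinset w r)) i j
        = (cdesL w i (cycInterval i j) : ℝ) - 1 + (k : ℝ) := by
  classical
  set s := w⁻¹ r + 1 with hs
  refine ⟨arcInd s (w⁻¹ i) (w⁻¹ j), ?_, ?_⟩
  · have h1 := arcInd_nonneg s (w⁻¹ i) (w⁻¹ j)
    have h2 := arcInd_le_one s (w⁻¹ i) (w⁻¹ j)
    omega
  · rw [cycSum_indic]
    have hji : (j - i).val ≠ 0 := fin_sub_ne_zero (Ne.symm hij)
    have hm : (j - i).val = ((j - i).val - 1) + 1 := by omega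
    have hsum := sum_arc hn w⁻¹ s ((j - i).val - 1) i j (by omega)
    have hinner : (∑ a ∈ Finset.univ.filter (fun a : Fin n => a - i < j - i),
        (if a ∈ IrFinset w r then (1 : ℤ) else 0))
        = ∑ a ∈ Finset.univ.filter (fun a : Fin n => a - i < j - i),
          arcInd s (w⁻¹ a) (w⁻¹ (a + 1)) :=
      Finset.sum_congr rfl fun a _ => indic_Ir hn w r a
    have hc := cdes_eval hn w i j hij
    have : (∑ a ∈ Finset.univ.filter (fun a : Fin n => a - i < j - i),
        (if a ∈ IrFinset w r then (1 : ℤ) else 0))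
        = (cdesL w i (cycInterval i j) : ℤ) - 1 + arcInd s (w⁻¹ i) (w⁻¹ j) := by
      rw [hinner, hsum]
      omega
    rw [this]
    push_cast
    ring

end Main

theorem w_simplex_cyclic_sum_bounds
    (n : ℕ) [NeZero n] (hn : 2 ≤ n) (w : Equiv.Perm (Fin n))
    (hw : w (lastF n) = lastF n) :
    ∀ x ∈ simplexW w, ∀ i j : Fin n, i ≠ j →
      (cdesL w i (cycInterval i j) : ℝ) - 1 ≤ cycSum x i j ∧
        cycSum x i j ≤ (cdesL w i (cycInterval i j) : ℝ) := by
  intro x hx i j hij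
  have hC : Convex ℝ {y : Fin n → ℝ |
      (cdesL w i (cycInterval i j) : ℝ) - 1 ≤ cycSum y i j ∧
        cycSum y i j ≤ (cdesL w i (cycInterval i j) : ℝ)} := by
    intro y hy z hz a b ha hb hab
    simp only [Set.mem_setOf_eq] at hy hz ⊢
    have hlin : cycSum (a • y + b • z) i j = a * cycSum y i j + b * cycSum z i j := by
      simp only [cycSum, Pi.add_apply, Pi.smul_apply, smul_eq_mul]
      rw [Finset.sum_add_distrib, Finset.mul_sum, Finset.mul_sum]
    rw [hlin]
    have hone : a * ((cdesL w i (cycInterval i j) : ℝ) - 1)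
        + b * ((cdesL w i (cycInterval i j) : ℝ) - 1)
        = (cdesL w i (cycInterval i j) : ℝ) - 1 := by
      rw [← add_mul, hab, one_mul]
    have htwo : a * (cdesL w i (cycInterval i j) : ℝ)
        + b * (cdesL w i (cycInterval i j) : ℝ)
        = (cdesL w i (cycInterval i j) : ℝ) := by
      rw [← add_mul, hab, one_mul]
    constructor
    · have h1 := mul_le_mul_of_nonneg_left hy.1 ha
      have h2 := mul_le_mul_of_nonneg_left hz.1 hb
      linarith
    · have h1 := mul_le_mul_of_nonneg_left hy.2 ha
      have h2 := mul_le_mul_of_nonneg_left hz.2 hb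
      linarith
  have hV : vertexSet w ⊆ {y : Fin n → ℝ |
      (cdesL w i (cycInterval i j) : ℝ) - 1 ≤ cycSum y i j ∧
        cycSum y i j ≤ (cdesL w i (cycInterval i j) : ℝ)} := by
    rintro y ⟨r, rfl⟩
    obtain ⟨k, hk01, hk⟩ := vertex_val hn w i j hij r
    simp only [Set.mem_setOf_eq]
    rw [hk]
    rcases hk01 with rfl | rfl
    · constructor <;> norm_num
    · constructor <;> norm_num
  exact convexHull_min hV hC hx

end PositroidPaper
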